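/- (van der Corput) Let k ≥ 1 be an integer, a < b real numbers, and ψ ∈ C^k([a,b]) real-valued with |ψ^{(k)}(x)| ≥ C > 0 for all x ∈ (a,b). Assume either (i) k = 1 and ψ'' has at most one zero in (a,b) (in particular ψ' is piecewise monotonic with at most two pieces), or (ii) k ≥ 2. Then there is a constant c_k depending only on k such that for all λ > 0, |∫_a^b e^{iλψ(t)} dt| ≤ c_k (λ C)^{−1/k}. -/

import Mathlib

open MeasureTheory Real Filter
open scoped Topology ENNReal

lemma vdc_iteratedDerivWithin_nhds {n : ℕ} {f : ℝ → ℝ} {s : Set ℝ} {x : ℝ} (h : s ∈ 𝓝 x) :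
    iteratedDerivWithin n f s x = iteratedDeriv n f x := by
  rw [iteratedDerivWithin_eq_iteratedFDerivWithin, ← iteratedDerivWithin_univ,
    iteratedDerivWithin_eq_iteratedFDerivWithin, ← Set.univ_inter s,
    iteratedFDerivWithin_inter h]

lemma vdc_ofReal_comp {f : ℝ → ℝ} {u z : ℝ} {s : Set ℝ} (hf : HasDerivWithinAt f u s z) :
    HasDerivWithinAt (fun y : ℝ => ((f y : ℂ))) u s z := by
  exact hf.ofReal_comp

lemma vdc_norm_exp (lam x : ℝ) : ‖Complex.exp (Complex.I * lam * (x : ℂ))‖ = 1 := by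
  rw [Complex.norm_exp]
  simp [Complex.mul_re]

/-- Core estimate: global continuity, `φ ≥ C` everywhere, `φ` monotone or antitone on `Icc`. -/
lemma vdc_core {a b C lam : ℝ} (hab : a ≤ b) (hC : 0 < C) (hlam : 0 < lam)
    {ψ φ : ℝ → ℝ} (hψ : Continuous ψ) (hφ : Continuous φ)
    (hpos : ∀ t, C ≤ φ t)
    (hd : ∀ t ∈ Set.Icc a b, HasDerivWithinAt ψ (φ t) (Set.Icc a b) t)
    (hmono : MonotoneOn φ (Set.Icc a b) ∨ AntitoneOn φ (Set.Icc a b)) :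
    ‖∫ t in a..b, Complex.exp (Complex.I * lam * (ψ t : ℂ))‖ ≤ 2 / (lam * C) := by
  have hφpos : ∀ t, 0 < φ t := fun t => lt_of_lt_of_le hC (hpos t)
  have hφne : ∀ t, φ t ≠ 0 := fun t => (hφpos t).ne'
  set G : ℝ → ℂ := fun t => Complex.exp (Complex.I * lam * (ψ t : ℂ)) with hG
  set F : ℝ → ℂ := fun t => (Complex.I * lam * (φ t : ℂ)) * G t with hF
  set h : ℝ → ℝ := fun t => (φ t)⁻¹ with hh
  have hhcont : Continuous h := hφ.inv₀ hφne
  have hhpos : ∀ t, 0 < h t := fun t => inv_pos.2 (hφpos t)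
  have hhle : ∀ t, h t ≤ C⁻¹ := fun t => inv_anti₀ hC (hpos t)
  have hGcont : Continuous G := Complex.continuous_exp.comp (by continuity)
  have hFcont : Continuous F := by
    apply Continuous.mul _ hGcont
    continuity
  have hGnorm : ∀ t, ‖G t‖ = 1 := fun t => vdc_norm_exp lam (ψ t)
  have hGd : ∀ t ∈ Set.Icc a b, HasDerivWithinAt G (F t) (Set.Icc a b) t := by
    intro t ht
    have h1 : HasDerivWithinAt (fun y : ℝ => ((ψ y : ℂ))) (φ t) (Set.Icc a b) t :=
      vdc_ofReal_comp (hd t ht)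
    have h2 : HasDerivWithinAt (fun y : ℝ => Complex.I * lam * (ψ y : ℂ))
        (Complex.I * lam * (φ t : ℂ)) (Set.Icc a b) t := h1.const_mul _
    simpa [hG, hF, mul_comm] using h2.cexp
  -- main bound
  have main : ‖∫ t in Set.Ioc a b, ((h t : ℂ) * F t)‖ ≤ 2 * C⁻¹ := by
    set A := Set.Ioc a b with hA
    set B := Set.Ioc (0:ℝ) C⁻¹ with hB
    haveI hfinA : IsFiniteMeasure (volume.restrict A) :=
      ⟨by rw [Measure.restrict_apply_univ]; exact measure_Ioc_lt_top⟩
    haveI hfinB : IsFiniteMeasure (volume.restrict B) :=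
      ⟨by rw [Measure.restrict_apply_univ]; exact measure_Ioc_lt_top⟩
    set f : ℝ → ℝ → ℂ := fun t s => if s < h t then F t else 0 with hfdef
    have layer : ∀ t, ((h t : ℂ) * F t) = ∫ s in B, f t s := by
      intro t
      have e1 : (fun s => f t s) = fun s => (Set.Iio (h t)).indicator (fun _ => F t) s := by
        funext s; simp [hfdef, Set.indicator_apply, Set.mem_Iio]
      rw [e1, setIntegral_indicator measurableSet_Iio, setIntegral_const]
      have e2 : B ∩ Set.Iio (h t) = Set.Ioo 0 (h t) := by
        ext s
        simp only [hB, Set.mem_inter_iff, Set.mem_Ioc, Set.mem_Ioo, Set.mem_Iio]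
        constructor
        · rintro ⟨⟨h1, _⟩, h3⟩; exact ⟨h1, h3⟩
        · rintro ⟨h1, h3⟩; exact ⟨⟨h1, le_trans (le_of_lt h3) (hhle t)⟩, h3⟩
      rw [e2, Real.volume_real_Ioo_of_le (hhpos t).le, sub_zero,
        Complex.real_smul]
    obtain ⟨M, hM⟩ := (isCompact_Icc (a := a) (b := b)).exists_bound_of_continuousOn
      hFcont.continuousOn
    have hmeas : AEStronglyMeasurable (Function.uncurry f)
        ((volume.restrict A).prod (volume.restrict B)) := by
      apply StronglyMeasurable.aestronglyMeasurable
      have e3 : Function.uncurry f =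
          Set.indicator {p : ℝ × ℝ | p.2 < h p.1} (fun p => F p.1) := by
        funext p
        simp only [Function.uncurry, hfdef, Set.indicator_apply, Set.mem_setOf_eq]
      rw [e3]
      exact ((hFcont.comp continuous_fst).stronglyMeasurable).indicator
        (measurableSet_lt measurable_snd (hhcont.measurable.comp measurable_fst))
    have hbdd : ∀ᵐ p ∂((volume.restrict A).prod (volume.restrict B)),
        ‖Function.uncurry f p‖ ≤ max M 0 := by
      rw [Measure.prod_restrict]
      filter_upwards [ae_restrict_mem (measurableSet_Ioc.prod measurableSet_Ioc)] with p hp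
      have hp1 : p.1 ∈ Set.Icc a b := Set.Ioc_subset_Icc_self hp.1
      have : ‖Function.uncurry f p‖ ≤ ‖F p.1‖ := by
        simp only [Function.uncurry, hfdef]
        split <;> simp
      exact this.trans (le_trans (hM _ hp1) (le_max_left _ _))
    have hint : Integrable (Function.uncurry f)
        ((volume.restrict A).prod (volume.restrict B)) :=
      Integrable.mono' (integrable_const _) hmeas hbdd
    have swap : ∫ t in A, ∫ s in B, f t s = ∫ s in B, ∫ t in A, f t s :=
      integral_integral_swap hint
    have inner_bound : ∀ s : ℝ, ‖∫ t in A, f t s‖ ≤ 2 := by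
      intro s
      have hS : MeasurableSet {t : ℝ | s < h t} :=
        measurableSet_lt measurable_const hhcont.measurable
      have hrw : ∫ t in A, f t s = ∫ t in {t : ℝ | s < h t} ∩ A, F t := by
        have e4 : (fun t => f t s) = fun t => Set.indicator {t : ℝ | s < h t} F t := by
          funext t; simp [hfdef, Set.indicator_apply]
        rw [e4, integral_indicator hS, Measure.restrict_restrict hS]
      rw [hrw]
      set T := {t : ℝ | s < h t} ∩ A with hT
      have hTsub : T ⊆ Set.Ioc a b := Set.inter_subset_right
      have hTord : T.OrdConnected := by
        constructor
        intro x hx z hz y hy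
        have hyA : y ∈ A := (Set.ordConnected_Ioc).out hx.2 hz.2 hy
        refine ⟨?_, hyA⟩
        have hxI : x ∈ Set.Icc a b := Set.Ioc_subset_Icc_self hx.2
        have hyI : y ∈ Set.Icc a b := Set.Ioc_subset_Icc_self hyA
        have hzI : z ∈ Set.Icc a b := Set.Ioc_subset_Icc_self hz.2
        rcases hmono with hm | hm
        · have : φ y ≤ φ z := hm hyI hzI hy.2
          have : h z ≤ h y := inv_anti₀ (hφpos y) this
          exact lt_of_lt_of_le hz.1 this
        · have : φ y ≤ φ x := hm hxI hyI hy.1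
          have : h x ≤ h y := inv_anti₀ (hφpos y) this
          exact lt_of_lt_of_le hx.1 this
      rcases Set.eq_empty_or_nonempty T with hTe | hTne
      · rw [hTe]; simp
      · have hbddB : BddBelow T := (bddBelow_Ioc).mono hTsub
        have hbddA : BddAbove T := (bddAbove_Ioc).mono hTsub
        set u := sInf T with hu
        set v := sSup T with hv
        have hua : a ≤ u := le_csInf hTne fun t ht => (hTsub ht).1.le
        have hvb : v ≤ b := csSup_le hTne fun t ht => (hTsub ht).2
        have huv : u ≤ v := csInf_le_csSup hTne hbddB hbddA
        have hIoo : Set.Ioo u v ⊆ T := by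
          intro x hx
          obtain ⟨p, hp, hpx⟩ := exists_lt_of_csInf_lt hTne hx.1
          obtain ⟨q, hq, hxq⟩ := exists_lt_of_lt_csSup hTne hx.2
          exact hTord.out hp hq ⟨hpx.le, hxq.le⟩
        have hIcc : T ⊆ Set.Icc u v := fun t ht => ⟨csInf_le hbddB ht, le_csSup hbddA ht⟩
        have hae : T =ᵐ[volume] Set.Ioo u v := by
          rw [MeasureTheory.ae_eq_set]
          constructor
          · refine measure_mono_null ?_ (((Set.finite_singleton v).insert u).measure_zero volume)
            intro x ⟨hx1, hx2⟩
            have hxI := hIcc hx1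
            simp only [Set.mem_Ioo, not_and_or, not_lt] at hx2
            rcases hx2 with h' | h'
            · simp [le_antisymm h' hxI.1]
            · simp [le_antisymm hxI.2 h']
          · have : Set.Ioo u v \ T = ∅ := Set.diff_eq_empty.2 hIoo
            rw [this]; exact measure_empty
        rw [setIntegral_congr_set hae, ← MeasureTheory.integral_Ioc_eq_integral_Ioo,
          ← intervalIntegral.integral_of_le huv]
        have hftc : ∫ t in u..v, F t = G v - G u := by
          apply intervalIntegral.integral_eq_sub_of_hasDeriv_right_of_le huv
            hGcont.continuousOn
          · intro x hx
            have hxm : x ∈ Set.Ioo a b :=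
              ⟨lt_of_le_of_lt hua hx.1, lt_of_lt_of_le hx.2 hvb⟩
            exact ((hGd x (Set.Ioo_subset_Icc_self hxm)).hasDerivAt
              (Icc_mem_nhds hxm.1 hxm.2)).hasDerivWithinAt
          · exact hFcont.intervalIntegrable u v
        rw [hftc]
        calc ‖G v - G u‖ ≤ ‖G v‖ + ‖G u‖ := norm_sub_le _ _
          _ = 2 := by rw [hGnorm, hGnorm]; norm_num
    calc ‖∫ t in A, ((h t : ℂ) * F t)‖ = ‖∫ s in B, ∫ t in A, f t s‖ := by
          rw [setIntegral_congr_fun measurableSet_Ioc fun t _ => layer t, swap]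
      _ ≤ 2 * (volume B).toReal :=
          norm_setIntegral_le_of_norm_le_const measure_Ioc_lt_top
            fun s _ => inner_bound s
      _ = 2 * C⁻¹ := by
          rw [hB, Real.volume_Ioc, sub_zero, ENNReal.toReal_ofReal (inv_nonneg.2 hC.le)]
  -- identity ∫ h F = I lam ∫ G
  have hident : ∫ t in Set.Ioc a b, ((h t : ℂ) * F t)
      = (Complex.I * lam) * ∫ t in a..b, G t := by
    rw [intervalIntegral.integral_of_le hab, ← MeasureTheory.integral_const_mul]
    apply setIntegral_congr_fun measurableSet_Ioc
    intro t _
    have h0 : (φ t : ℂ) ≠ 0 := by exact_mod_cast hφne t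
    simp only [hF, hh, Complex.ofReal_inv]
    field_simp
  have hnorm : lam * ‖∫ t in a..b, G t‖ ≤ 2 * C⁻¹ := by
    calc lam * ‖∫ t in a..b, G t‖ = ‖(Complex.I * lam) * ∫ t in a..b, G t‖ := by
          rw [norm_mul]
          simp [abs_of_pos hlam]
      _ = ‖∫ t in Set.Ioc a b, ((h t : ℂ) * F t)‖ := by rw [hident]
      _ ≤ 2 * C⁻¹ := main
  have h2 : ‖∫ t in a..b, G t‖ ≤ (2 * C⁻¹) / lam := by
    rw [le_div_iff₀ hlam]; linarith [hnorm]
  have : (2 * C⁻¹) / lam = 2 / (lam * C) := by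
    field_simp
  exact le_of_le_of_eq h2 this

/-- A single monotone piece, with only `ContinuousOn` data and `C ≤ |φ|`. -/
lemma vdc_piece {a b C lam : ℝ} (hab : a ≤ b) (hC : 0 < C) (hlam : 0 < lam)
    {ψ φ : ℝ → ℝ} (hψc : ContinuousOn ψ (Set.Icc a b)) (hφc : ContinuousOn φ (Set.Icc a b))
    (hd : ∀ t ∈ Set.Icc a b, HasDerivWithinAt ψ (φ t) (Set.Icc a b) t)
    (hmono : MonotoneOn φ (Set.Icc a b) ∨ AntitoneOn φ (Set.Icc a b))
    (habs : ∀ t ∈ Set.Icc a b, C ≤ |φ t|) :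
    ‖∫ t in a..b, Complex.exp (Complex.I * lam * (ψ t : ℂ))‖ ≤ 2 / (lam * C) := by
  -- sign dichotomy
  have hconst : (∀ t ∈ Set.Icc a b, C ≤ φ t) ∨ (∀ t ∈ Set.Icc a b, φ t ≤ -C) := by
    by_contra hcon
    push_neg at hcon
    obtain ⟨⟨x, hx, hx2⟩, ⟨y, hy, hy2⟩⟩ := hcon
    have hxneg : φ x ≤ -C := by
      rcases abs_cases (φ x) with ⟨he, _⟩ | ⟨he, _⟩
      · exact absurd (he ▸ habs x hx) (not_le.2 hx2)
      · linarith [habs x hx]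
    have hypos : C ≤ φ y := by
      rcases abs_cases (φ y) with ⟨he, _⟩ | ⟨he, _⟩
      · exact he ▸ habs y hy
      · linarith [habs y hy]
    have hsub : Set.uIcc x y ⊆ Set.Icc a b := Set.uIcc_subset_Icc hx hy
    have h0 : (0 : ℝ) ∈ Set.uIcc (φ x) (φ y) := by
      rw [Set.mem_uIcc]; left; constructor <;> linarith
    obtain ⟨z, hz, hz0⟩ := intermediate_value_uIcc (hφc.mono hsub) h0
    have := habs z (hsub hz)
    rw [hz0] at this
    simp at this
    linarith
  -- projection onto the interval
  set proj : ℝ → ℝ := fun t => max a (min b t) with hproj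
  have hprojc : Continuous proj := continuous_const.max (continuous_const.min continuous_id)
  have hprojmem : ∀ t, proj t ∈ Set.Icc a b := fun t =>
    ⟨le_max_left _ _, max_le hab (min_le_left _ _)⟩
  have hprojid : ∀ t ∈ Set.Icc a b, proj t = t := fun t ht => by
    rw [hproj]; simp only; rw [min_eq_right ht.2, max_eq_right ht.1]
  rcases hconst with hsig | hsig
  · -- positive case
    set ψ' : ℝ → ℝ := fun t => ψ (proj t) with hψ'
    set φ' : ℝ → ℝ := fun t => φ (proj t) with hφ'
    have h1 : Continuous ψ' := hψc.comp_continuous hprojc hprojmem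
    have h2 : Continuous φ' := hφc.comp_continuous hprojc hprojmem
    have h3 : ∀ t, C ≤ φ' t := fun t => hsig _ (hprojmem t)
    have h4 : ∀ t ∈ Set.Icc a b, HasDerivWithinAt ψ' (φ' t) (Set.Icc a b) t := by
      intro t ht
      have := (hd t ht).congr (f₁ := ψ')
        (fun y hy => by show ψ (proj y) = ψ y; rw [hprojid y hy])
        (by show ψ (proj t) = ψ t; rw [hprojid t ht])
      show HasDerivWithinAt ψ' (φ (proj t)) (Set.Icc a b) t
      rwa [hprojid t ht]
    have h5 : MonotoneOn φ' (Set.Icc a b) ∨ AntitoneOn φ' (Set.Icc a b) := by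
      rcases hmono with hm | hm
      · exact Or.inl fun s hs t ht hst => by
          show φ (proj s) ≤ φ (proj t)
          rw [hprojid s hs, hprojid t ht]; exact hm hs ht hst
      · exact Or.inr fun s hs t ht hst => by
          show φ (proj t) ≤ φ (proj s)
          rw [hprojid s hs, hprojid t ht]; exact hm hs ht hst
    have := vdc_core hab hC hlam h1 h2 h3 h4 h5
    have heq : ∫ t in a..b, Complex.exp (Complex.I * lam * (ψ' t : ℂ))
        = ∫ t in a..b, Complex.exp (Complex.I * lam * (ψ t : ℂ)) := by
      apply intervalIntegral.integral_congr
      intro t ht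
      rw [Set.uIcc_of_le hab] at ht
      show Complex.exp (Complex.I * lam * (ψ (proj t) : ℂ)) = _
      rw [hprojid t ht]
    rwa [heq] at this
  · -- negative case: apply to -ψ, -φ and conjugate
    set ψ' : ℝ → ℝ := fun t => -ψ (proj t) with hψ'
    set φ' : ℝ → ℝ := fun t => -φ (proj t) with hφ'
    have h1 : Continuous ψ' := (hψc.comp_continuous hprojc hprojmem).neg
    have h2 : Continuous φ' := (hφc.comp_continuous hprojc hprojmem).neg
    have h3 : ∀ t, C ≤ φ' t := fun t => by
      have := hsig _ (hprojmem t)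
      show C ≤ -φ (proj t); linarith
    have h4 : ∀ t ∈ Set.Icc a b, HasDerivWithinAt ψ' (φ' t) (Set.Icc a b) t := by
      intro t ht
      have := ((hd t ht).neg).congr (f₁ := ψ')
        (fun y hy => by show -ψ (proj y) = -ψ y; rw [hprojid y hy])
        (by show -ψ (proj t) = -ψ t; rw [hprojid t ht])
      show HasDerivWithinAt ψ' (-φ (proj t)) (Set.Icc a b) t
      rwa [hprojid t ht]
    have h5 : MonotoneOn φ' (Set.Icc a b) ∨ AntitoneOn φ' (Set.Icc a b) := by
      rcases hmono with hm | hm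
      · exact Or.inr fun s hs t ht hst => by
          show -φ (proj t) ≤ -φ (proj s)
          rw [hprojid s hs, hprojid t ht]
          exact neg_le_neg (hm hs ht hst)
      · exact Or.inl fun s hs t ht hst => by
          show -φ (proj s) ≤ -φ (proj t)
          rw [hprojid s hs, hprojid t ht]
          exact neg_le_neg (hm hs ht hst)
    have hb := vdc_core hab hC hlam h1 h2 h3 h4 h5
    have heq : ∫ t in a..b, Complex.exp (Complex.I * lam * (ψ' t : ℂ))
        = (starRingEnd ℂ) (∫ t in a..b, Complex.exp (Complex.I * lam * (ψ t : ℂ))) := by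
      rw [intervalIntegral.integral_of_le hab, intervalIntegral.integral_of_le hab,
        ← integral_conj]
      apply setIntegral_congr_fun measurableSet_Ioc
      intro t ht
      have htI : t ∈ Set.Icc a b := Set.Ioc_subset_Icc_self ht
      show Complex.exp (Complex.I * lam * ((-ψ (proj t) : ℝ) : ℂ)) = _
      rw [hprojid t htI]
      show _ = (starRingEnd ℂ) (Complex.exp (Complex.I * lam * (ψ t : ℂ)))
      rw [← Complex.exp_conj]
      congr 1
      simp only [map_mul, Complex.conj_I, Complex.conj_ofReal, Complex.ofReal_neg]
      ring
    rw [heq, RCLike.norm_conj] at hb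
    exact hb

lemma vdc_closure {a b C : ℝ} (hab : a < b) {φ : ℝ → ℝ}
    (hφ : ContinuousOn φ (Set.Icc a b))
    (h : ∀ x ∈ Set.Ioo a b, C ≤ |φ x|) : ∀ x ∈ Set.Icc a b, C ≤ |φ x| := by
  intro x hx
  have hcl : x ∈ closure (Set.Ioo a b) := by rw [closure_Ioo hab.ne]; exact hx
  haveI : (𝓝[Set.Ioo a b] x).NeBot := mem_closure_iff_nhdsWithin_neBot.1 hcl
  have htend : Tendsto (fun y => |φ y|) (𝓝[Set.Ioo a b] x) (𝓝 |φ x|) :=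
    (continuous_abs.tendsto _).comp ((hφ x hx).mono Set.Ioo_subset_Icc_self)
  exact ge_of_tendsto htend (eventually_mem_nhdsWithin.mono fun y hy => h y hy)

lemma vdc_base {a b C lam : ℝ} (hab : a < b) (hC : 0 < C) (hlam : 0 < lam)
    {ψ : ℝ → ℝ} (hψ : ContDiffOn ℝ 1 ψ (Set.Icc a b))
    (hder : ∀ x ∈ Set.Ioo a b, C ≤ |iteratedDerivWithin 1 ψ (Set.Icc a b) x|)
    (hsub : {x ∈ Set.Ioo a b | deriv (deriv ψ) x = 0}.Subsingleton) :
    ‖∫ t in a..b, Complex.exp (Complex.I * lam * (ψ t : ℂ))‖ ≤ 4 / (lam * C) := by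
  have hUD : UniqueDiffOn ℝ (Set.Icc a b) := uniqueDiffOn_Icc hab
  set φ : ℝ → ℝ := derivWithin ψ (Set.Icc a b) with hφdef
  have hφcont : ContinuousOn φ (Set.Icc a b) :=
    hψ.continuousOn_derivWithin hUD le_rfl
  have hd : ∀ t ∈ Set.Icc a b, HasDerivWithinAt ψ (φ t) (Set.Icc a b) t := fun t ht =>
    ((hψ.differentiableOn one_ne_zero) t ht).hasDerivWithinAt
  have habsIoo : ∀ x ∈ Set.Ioo a b, C ≤ |φ x| := by
    intro x hx
    have := hder x hx
    rwa [iteratedDerivWithin_one] at this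
  have habsIcc : ∀ x ∈ Set.Icc a b, C ≤ |φ x| := vdc_closure hab hφcont habsIoo
  -- φ equals deriv ψ on the interior
  have hφint : ∀ y ∈ Set.Ioo a b, φ y = deriv ψ y := fun y hy =>
    derivWithin_of_mem_nhds (Icc_mem_nhds hy.1 hy.2)
  -- one monotone piece
  have piece : ∀ u v, a ≤ u → u < v → v ≤ b →
      (∀ x ∈ Set.Ioo u v, deriv (deriv ψ) x ≠ 0) →
      ‖∫ t in u..v, Complex.exp (Complex.I * lam * (ψ t : ℂ))‖ ≤ 2 / (lam * C) := by
    intro u v hau huv hvb hne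
    have hIccsub : Set.Icc u v ⊆ Set.Icc a b := Set.Icc_subset_Icc hau hvb
    have hIoosub : Set.Ioo u v ⊆ Set.Ioo a b := Set.Ioo_subset_Ioo hau hvb
    -- differentiability of φ at interior points, with deriv φ = deriv (deriv ψ)
    have key : ∀ x ∈ Set.Ioo u v, DifferentiableAt ℝ φ x ∧ deriv φ x = deriv (deriv ψ) x := by
      intro x hx
      have hx' : x ∈ Set.Ioo a b := hIoosub hx
      have heq : φ =ᶠ[𝓝 x] deriv ψ :=
        eventually_of_mem (isOpen_Ioo.mem_nhds hx') hφint
      have hdd : DifferentiableAt ℝ (deriv ψ) x := differentiableAt_of_deriv_ne_zero (hne x hx)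
      exact ⟨heq.differentiableAt_iff.2 hdd, heq.deriv_eq⟩
    have hne' : ∀ x ∈ Set.Ioo u v, deriv φ x ≠ 0 := fun x hx =>
      (key x hx).2 ▸ hne x hx
    -- Darboux: constant sign
    have dsign : (∀ x ∈ Set.Ioo u v, 0 < deriv φ x) ∨ (∀ x ∈ Set.Ioo u v, deriv φ x < 0) := by
      by_contra hcon
      push_neg at hcon
      obtain ⟨⟨x, hx, hx0⟩, ⟨y, hy, hy0⟩⟩ := hcon
      have hxneg : deriv φ x < 0 := lt_of_le_of_ne hx0 (hne' x hx)
      have hypos : 0 < deriv φ y := lt_of_le_of_ne hy0 (Ne.symm (hne' y hy))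
      have hxy : x ≠ y := fun h => by rw [h] at hxneg; linarith
      rcases lt_or_gt_of_ne hxy with hlt | hgt
      · have hsubxy : Set.Icc x y ⊆ Set.Ioo u v := fun z hz =>
          ⟨lt_of_lt_of_le hx.1 hz.1, lt_of_le_of_lt hz.2 hy.2⟩
        obtain ⟨c, hc, hc0⟩ := exists_hasDerivWithinAt_eq_of_gt_of_lt hlt.le
          (fun z hz => ((key z (hsubxy hz)).1.hasDerivAt).hasDerivWithinAt) hxneg hypos
        exact hne' c (hsubxy (Set.Ioo_subset_Icc_self hc)) hc0
      · have hsubxy : Set.Icc y x ⊆ Set.Ioo u v := fun z hz =>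
          ⟨lt_of_lt_of_le hy.1 hz.1, lt_of_le_of_lt hz.2 hx.2⟩
        obtain ⟨c, hc, hc0⟩ := exists_hasDerivWithinAt_eq_of_lt_of_gt hgt.le
          (fun z hz => ((key z (hsubxy hz)).1.hasDerivAt).hasDerivWithinAt) hypos hxneg
        exact hne' c (hsubxy (Set.Ioo_subset_Icc_self hc)) hc0
    -- monotonicity
    have hmono : MonotoneOn φ (Set.Icc u v) ∨ AntitoneOn φ (Set.Icc u v) := by
      rcases dsign with hs | hs
      · left
        exact (strictMonoOn_of_deriv_pos (convex_Icc u v) (hφcont.mono hIccsub)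
          (fun x hx => hs x (by rwa [interior_Icc] at hx))).monotoneOn
      · right
        exact (strictAntiOn_of_deriv_neg (convex_Icc u v) (hφcont.mono hIccsub)
          (fun x hx => hs x (by rwa [interior_Icc] at hx))).antitoneOn
    exact vdc_piece huv.le hC hlam (hψ.continuousOn.mono hIccsub) (hφcont.mono hIccsub)
      (fun t ht => (hd t (hIccsub ht)).mono hIccsub) hmono
      (fun t ht => habsIcc t (hIccsub ht))
  -- choose the splitting point
  obtain ⟨m, hm, hmz⟩ : ∃ m ∈ Set.Ioo a b,
      ∀ x ∈ Set.Ioo a b, x ≠ m → deriv (deriv ψ) x ≠ 0 := by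
    rcases Set.eq_empty_or_nonempty {x ∈ Set.Ioo a b | deriv (deriv ψ) x = 0} with he | ⟨m0, hm0⟩
    · refine ⟨(a + b) / 2, ⟨by linarith, by linarith⟩, fun x hx _ hx0 => ?_⟩
      exact (Set.eq_empty_iff_forall_notMem.1 he x) ⟨hx, hx0⟩
    · exact ⟨m0, hm0.1, fun x hx hne hx0 => hne (hsub ⟨hx, hx0⟩ hm0)⟩
  -- split and conclude
  have hcont : ContinuousOn (fun t => Complex.exp (Complex.I * lam * (ψ t : ℂ))) (Set.Icc a b) := by
    apply Complex.continuous_exp.comp_continuousOn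
    exact continuousOn_const.mul (Complex.continuous_ofReal.comp_continuousOn hψ.continuousOn)
  have hint1 : IntervalIntegrable (fun t => Complex.exp (Complex.I * lam * (ψ t : ℂ)))
      volume a m := by
    apply ContinuousOn.intervalIntegrable
    apply hcont.mono
    rw [Set.uIcc_of_le hm.1.le]
    exact Set.Icc_subset_Icc le_rfl hm.2.le
  have hint2 : IntervalIntegrable (fun t => Complex.exp (Complex.I * lam * (ψ t : ℂ)))
      volume m b := by
    apply ContinuousOn.intervalIntegrable
    apply hcont.mono
    rw [Set.uIcc_of_le hm.2.le]
    exact Set.Icc_subset_Icc hm.1.le le_rfl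
  have hsplit := (intervalIntegral.integral_add_adjacent_intervals hint1 hint2)
  have p1 := piece a m le_rfl hm.1 hm.2.le
    (fun x hx => hmz x ⟨hx.1, hx.2.trans hm.2⟩ hx.2.ne)
  have p2 := piece m b hm.1.le hm.2 le_rfl
    (fun x hx => hmz x ⟨hm.1.trans hx.1, hx.2⟩ (ne_of_gt hx.1))
  calc ‖∫ t in a..b, Complex.exp (Complex.I * lam * (ψ t : ℂ))‖
      = ‖(∫ t in a..m, Complex.exp (Complex.I * lam * (ψ t : ℂ)))
          + ∫ t in m..b, Complex.exp (Complex.I * lam * (ψ t : ℂ))‖ := by rw [hsplit]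
    _ ≤ 2 / (lam * C) + 2 / (lam * C) := (norm_add_le _ _).trans (add_le_add p1 p2)
    _ = 4 / (lam * C) := by ring

lemma vdc_sign {s : Set ℝ} (hs : s.OrdConnected) {φ : ℝ → ℝ} (hφ : ContinuousOn φ s)
    {C : ℝ} (hC : 0 < C) (h : ∀ x ∈ s, C ≤ |φ x|) :
    (∀ x ∈ s, C ≤ φ x) ∨ (∀ x ∈ s, φ x ≤ -C) := by
  by_contra hcon
  push_neg at hcon
  obtain ⟨⟨x, hx, hx2⟩, ⟨y, hy, hy2⟩⟩ := hcon
  have hxneg : φ x ≤ -C := by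
    rcases abs_cases (φ x) with ⟨he, _⟩ | ⟨he, _⟩
    · exact absurd (he ▸ h x hx) (not_le.2 hx2)
    · linarith [h x hx]
  have hypos : C ≤ φ y := by
    rcases abs_cases (φ y) with ⟨he, _⟩ | ⟨he, _⟩
    · exact he ▸ h y hy
    · linarith [h y hy]
  have hsub : Set.uIcc x y ⊆ s := hs.uIcc_subset hx hy
  have h0 : (0 : ℝ) ∈ Set.uIcc (φ x) (φ y) := by
    rw [Set.mem_uIcc]; left; constructor <;> linarith
  obtain ⟨z, hz, hz0⟩ := intermediate_value_uIcc (hφ.mono hsub) h0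
  have := h z (hsub hz)
  rw [hz0] at this
  simp at this
  linarith

def VdcBound (k : ℕ) (c : ℝ) : Prop :=
  ∀ (a b : ℝ), a < b → ∀ (ψ : ℝ → ℝ) (C : ℝ), 0 < C →
    ContDiffOn ℝ k ψ (Set.Icc a b) →
    (∀ x ∈ Set.Ioo a b, C ≤ |iteratedDerivWithin k ψ (Set.Icc a b) x|) →
    ((k = 1 ∧ {x ∈ Set.Ioo a b | deriv (deriv ψ) x = 0}.Subsingleton) ∨ 2 ≤ k) →
    ∀ lam : ℝ, 0 < lam →
      ‖∫ t in a..b, Complex.exp (Complex.I * lam * (ψ t : ℂ))‖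
        ≤ c * (lam * C) ^ (-(1 / (k : ℝ)))

lemma vdc_step_pos {k : ℕ} {c : ℝ} (hk : 1 ≤ k) (hc : 0 < c) (hIH : VdcBound k c)
    {a b C lam : ℝ} (hab : a < b) (hC : 0 < C) (hlam : 0 < lam)
    {ψ : ℝ → ℝ} (hsmooth : ContDiffOn ℝ (k + 1 : ℕ) ψ (Set.Icc a b))
    (hpos : ∀ x ∈ Set.Ioo a b,
      C ≤ derivWithin (iteratedDerivWithin k ψ (Set.Icc a b)) (Set.Icc a b) x) :
    ‖∫ t in a..b, Complex.exp (Complex.I * lam * (ψ t : ℂ))‖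
      ≤ (2 * c + 2) * (lam * C) ^ (-(1 / ((k : ℝ) + 1))) := by
  have hUD : UniqueDiffOn ℝ (Set.Icc a b) := uniqueDiffOn_Icc hab
  have hkR : (0 : ℝ) < (k : ℝ) := by
    have : 0 < k := hk
    exact_mod_cast this
  set g : ℝ → ℝ := iteratedDerivWithin k ψ (Set.Icc a b) with hgdef
  set δ : ℝ := (lam * C) ^ (-(1 / ((k : ℝ) + 1))) with hδdef
  have hlc : 0 < lam * C := mul_pos hlam hC
  have hδ : 0 < δ := Real.rpow_pos_of_pos hlc _
  have hCδ : 0 < C * δ := mul_pos hC hδ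
  -- exponent arithmetic
  have hδeq : (lam * (C * δ)) ^ (-(1 / (k : ℝ))) = δ := by
    have h1 : lam * (C * δ) = (lam * C) ^ ((1 : ℝ) + -(1 / ((k : ℝ) + 1))) := by
      rw [Real.rpow_add hlc, Real.rpow_one, hδdef]; ring
    have h2 : ((1 : ℝ) + -(1 / ((k : ℝ) + 1))) * (-(1 / (k : ℝ))) = -(1 / ((k : ℝ) + 1)) := by
      have hk1 : (k : ℝ) + 1 ≠ 0 := by positivity
      field_simp
      ring
    rw [h1, ← Real.rpow_mul hlc.le, h2]
  -- continuity and growth of g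
  have hgC : ContinuousOn g (Set.Icc a b) :=
    hsmooth.continuousOn_iteratedDerivWithin (by exact_mod_cast Nat.le_succ k) hUD
  have hgdiff : DifferentiableOn ℝ g (Set.Icc a b) :=
    hsmooth.differentiableOn_iteratedDerivWithin (by exact_mod_cast Nat.lt_succ_self k) hUD
  have hderiv_eq : ∀ x ∈ Set.Ioo a b, deriv g x = derivWithin g (Set.Icc a b) x := fun x hx =>
    (derivWithin_of_mem_nhds (Icc_mem_nhds hx.1 hx.2)).symm
  have hgrow : ∀ x ∈ Set.Icc a b, ∀ y ∈ Set.Icc a b, x ≤ y → C * (y - x) ≤ g y - g x := by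
    apply Convex.mul_sub_le_image_sub_of_le_deriv (convex_Icc a b) hgC
    · rw [interior_Icc]
      intro x hx
      exact ((hgdiff x (Set.Ioo_subset_Icc_self hx)).differentiableAt
        (Icc_mem_nhds hx.1 hx.2)).differentiableWithinAt
    · intro x hx
      rw [interior_Icc] at hx
      rw [hderiv_eq x hx]
      exact hpos x hx
  have hmono_g : MonotoneOn g (Set.Icc a b) := fun x hx y hy hxy => by
    have := hgrow x hx y hy hxy
    nlinarith
  -- splitting points
  set S1 : Set ℝ := {x ∈ Set.Icc a b | g x ≤ -(C * δ)} with hS1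
  set S2 : Set ℝ := {x ∈ Set.Icc a b | C * δ ≤ g x} with hS2
  set u : ℝ := sSup (insert a S1) with hu
  set v : ℝ := sInf (insert b S2) with hv
  have hS1sub : insert a S1 ⊆ Set.Icc a b := by
    intro x hx
    rcases hx with rfl | hx
    · exact ⟨le_rfl, hab.le⟩
    · exact hx.1
  have hS2sub : insert b S2 ⊆ Set.Icc a b := by
    intro x hx
    rcases hx with rfl | hx
    · exact ⟨hab.le, le_rfl⟩
    · exact hx.1
  have hbdd1 : BddAbove (insert a S1) := (bddAbove_Icc).mono hS1sub
  have hbdd2 : BddBelow (insert b S2) := (bddBelow_Icc).mono hS2sub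
  have hne1 : (insert a S1).Nonempty := ⟨a, Set.mem_insert _ _⟩
  have hne2 : (insert b S2).Nonempty := ⟨b, Set.mem_insert _ _⟩
  have hau : a ≤ u := le_csSup hbdd1 (Set.mem_insert _ _)
  have hub : u ≤ b := csSup_le hne1 fun x hx => (hS1sub hx).2
  have hav : a ≤ v := le_csInf hne2 fun x hx => (hS2sub hx).1
  have hvb : v ≤ b := csInf_le hbdd2 (Set.mem_insert _ _)
  have huv : u ≤ v := by
    apply csSup_le hne1
    intro x hx
    apply le_csInf hne2
    intro y hy
    rcases hx with rfl | hx
    · rcases hy with rfl | hy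
      · exact hab.le
      · exact hy.1.1
    · rcases hy with rfl | hy
      · exact hx.1.2
      · by_contra hcon
        push_neg at hcon
        have := hmono_g hy.1 hx.1 hcon.le
        have h1 : C * δ ≤ g y := hy.2
        have h2 : g x ≤ -(C * δ) := hx.2
        nlinarith
  -- bounds on the side pieces
  have hIccuv : Set.Icc a u ⊆ Set.Icc a b := Set.Icc_subset_Icc le_rfl hub
  have hleft : ∀ x ∈ Set.Ioo a u, C * δ ≤ |g x| := by
    intro x hx
    obtain ⟨p, hp, hxp⟩ := exists_lt_of_lt_csSup hne1 hx.2
    have hpS1 : p ∈ S1 := by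
      rcases hp with rfl | hp
      · exact absurd hxp (not_lt.2 hx.1.le)
      · exact hp
    have hgx : g x ≤ -(C * δ) := by
      have hxI : x ∈ Set.Icc a b := ⟨hx.1.le, (hx.2.trans_le hub).le⟩
      exact le_trans (hmono_g hxI hpS1.1 hxp.le) hpS1.2
    rw [abs_of_nonpos (by nlinarith)]
    linarith
  have hright : ∀ x ∈ Set.Ioo v b, C * δ ≤ |g x| := by
    intro x hx
    obtain ⟨p, hp, hpx⟩ := exists_lt_of_csInf_lt hne2 hx.1
    have hpS2 : p ∈ S2 := by
      rcases hp with rfl | hp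
      · exact absurd hpx (not_lt.2 hx.2.le)
      · exact hp
    have hgx : C * δ ≤ g x := by
      have hxI : x ∈ Set.Icc a b := ⟨hav.trans hx.1.le, hx.2.le⟩
      exact le_trans hpS2.2 (hmono_g hpS2.1 hxI hpx.le)
    rw [abs_of_nonneg (by nlinarith)]
    exact hgx
  -- middle piece is short
  have hmid : v - u ≤ 2 * δ := by
    by_contra hcon
    push_neg at hcon
    set ε : ℝ := (v - u - 2 * δ) / 3 with hε
    have hεpos : 0 < ε := by rw [hε]; linarith
    set x : ℝ := u + ε with hx
    set y : ℝ := v - ε with hy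
    have hxy : x ≤ y := by rw [hx, hy, hε]; linarith
    have hxuv : x ∈ Set.Ioo u v := ⟨by rw [hx]; linarith, by rw [hx, hε]; linarith⟩
    have hyuv : y ∈ Set.Ioo u v := ⟨by rw [hy, hε]; linarith, by rw [hy]; linarith⟩
    have hxI : x ∈ Set.Icc a b := ⟨hau.trans hxuv.1.le, hxuv.2.le.trans hvb⟩
    have hyI : y ∈ Set.Icc a b := ⟨hau.trans hyuv.1.le, hyuv.2.le.trans hvb⟩
    have hgx : -(C * δ) < g x := by
      by_contra hgx
      push_neg at hgx
      have : x ∈ S1 := ⟨hxI, hgx⟩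
      have : x ≤ u := le_csSup hbdd1 (Set.mem_insert_of_mem _ this)
      linarith [hxuv.1]
    have hgy : g y < C * δ := by
      by_contra hgy
      push_neg at hgy
      have : y ∈ S2 := ⟨hyI, hgy⟩
      have : v ≤ y := csInf_le hbdd2 (Set.mem_insert_of_mem _ this)
      linarith [hyuv.2]
    have := hgrow x hxI y hyI hxy
    have hyx : y - x = v - u - 2 * ε := by rw [hx, hy]; ring
    nlinarith
  -- integrability pieces
  have hcont : ContinuousOn (fun t => Complex.exp (Complex.I * lam * (ψ t : ℂ)))
      (Set.Icc a b) := by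
    apply Complex.continuous_exp.comp_continuousOn
    exact continuousOn_const.mul (Complex.continuous_ofReal.comp_continuousOn
      hsmooth.continuousOn)
  have hintble : ∀ p q, a ≤ p → p ≤ q → q ≤ b →
      IntervalIntegrable (fun t => Complex.exp (Complex.I * lam * (ψ t : ℂ))) volume p q := by
    intro p q hp hpq hq
    apply ContinuousOn.intervalIntegrable
    apply hcont.mono
    rw [Set.uIcc_of_le hpq]
    exact Set.Icc_subset_Icc hp hq
  -- side piece bound via induction hypothesis
  have hside : ∀ p q, a ≤ p → p ≤ q → q ≤ b → (∀ x ∈ Set.Ioo p q, C * δ ≤ |g x|) →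
      ‖∫ t in p..q, Complex.exp (Complex.I * lam * (ψ t : ℂ))‖ ≤ c * δ := by
    intro p q hp hpq hq hbound
    rcases eq_or_lt_of_le hpq with rfl | hpq'
    · rw [intervalIntegral.integral_same]
      simp only [norm_zero]
      positivity
    · have happ := hIH p q hpq' ψ (C * δ) hCδ
        ((hsmooth.of_le (by exact_mod_cast Nat.le_succ k)).mono (Set.Icc_subset_Icc hp hq))
        ?_ ?_ lam hlam
      · rw [hδeq] at happ
        exact happ
      · intro x hx
        have hxab : x ∈ Set.Ioo a b := ⟨hp.trans_lt hx.1, hx.2.trans_le hq⟩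
        have he1 : iteratedDerivWithin k ψ (Set.Icc p q) x = iteratedDeriv k ψ x :=
          vdc_iteratedDerivWithin_nhds (Icc_mem_nhds hx.1 hx.2)
        have he2 : g x = iteratedDeriv k ψ x :=
          vdc_iteratedDerivWithin_nhds (Icc_mem_nhds hxab.1 hxab.2)
        rw [he1, ← he2]
        exact hbound x hx
      · by_cases hk1 : k = 1
        · left
          refine ⟨hk1, ?_⟩
          intro z hz w hw
          exfalso
          have hzab : z ∈ Set.Ioo a b := ⟨hp.trans_lt hz.1.1, hz.1.2.trans_le hq⟩
          -- deriv (deriv ψ) z = derivWithin g (Icc a b) z ≥ C > 0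
          have heq1 : deriv ψ =ᶠ[𝓝 z] g := by
            apply eventually_of_mem (isOpen_Ioo.mem_nhds hzab)
            intro y hy
            have : derivWithin ψ (Set.Icc a b) y = deriv ψ y :=
              derivWithin_of_mem_nhds (Icc_mem_nhds hy.1 hy.2)
            rw [hgdef, hk1]
            rw [iteratedDerivWithin_one]
            exact this.symm
          obtain ⟨hz1, hz2⟩ := hz
          have heq2 : deriv (deriv ψ) z = deriv g z := heq1.deriv_eq
          have h0 : derivWithin g (Set.Icc a b) z = 0 := by
            rw [← hderiv_eq z hzab, ← heq2]; exact hz2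
          have := hpos z hzab
          rw [h0] at this
          linarith
        · right
          omega
  -- assemble
  have hsplit1 := intervalIntegral.integral_add_adjacent_intervals
    (hintble a u le_rfl hau hub) (hintble u b hau hub le_rfl)
  have hsplit2 := intervalIntegral.integral_add_adjacent_intervals
    (hintble u v hau huv hvb) (hintble v b (hau.trans huv) hvb le_rfl)
  have hmid_bound : ‖∫ t in u..v, Complex.exp (Complex.I * lam * (ψ t : ℂ))‖ ≤ 2 * δ := by
    have h1 : ‖∫ t in u..v, Complex.exp (Complex.I * lam * (ψ t : ℂ))‖ ≤ 1 * |v - u| := by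
      apply intervalIntegral.norm_integral_le_of_norm_le_const
      intro x _
      rw [Complex.norm_exp]
      simp [Complex.mul_re]
    rw [abs_of_nonneg (by linarith)] at h1
    linarith
  have hb1 := hside a u le_rfl hau hub hleft
  have hb2 := hside v b (hau.trans huv) hvb le_rfl hright
  calc ‖∫ t in a..b, Complex.exp (Complex.I * lam * (ψ t : ℂ))‖
      = ‖(∫ t in a..u, Complex.exp (Complex.I * lam * (ψ t : ℂ)))
          + ((∫ t in u..v, Complex.exp (Complex.I * lam * (ψ t : ℂ)))
            + ∫ t in v..b, Complex.exp (Complex.I * lam * (ψ t : ℂ)))‖ := by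
        rw [hsplit2, hsplit1]
    _ ≤ ‖∫ t in a..u, Complex.exp (Complex.I * lam * (ψ t : ℂ))‖
        + (‖∫ t in u..v, Complex.exp (Complex.I * lam * (ψ t : ℂ))‖
          + ‖∫ t in v..b, Complex.exp (Complex.I * lam * (ψ t : ℂ))‖) :=
        (norm_add_le _ _).trans (by gcongr; exact norm_add_le _ _)
    _ ≤ c * δ + (2 * δ + c * δ) := add_le_add hb1 (add_le_add hmid_bound hb2)
    _ = (2 * c + 2) * δ := by ring

lemma vdc_step {k : ℕ} {c : ℝ} (hk : 1 ≤ k) (hc : 0 < c) (hIH : VdcBound k c) :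
    VdcBound (k + 1) (2 * c + 2) := by
  intro a b hab ψ C hC hsmooth hder _ lam hlam
  have hUD : UniqueDiffOn ℝ (Set.Icc a b) := uniqueDiffOn_Icc hab
  set G1 : ℝ → ℝ := derivWithin (iteratedDerivWithin k ψ (Set.Icc a b)) (Set.Icc a b)
    with hG1def
  have hder' : ∀ x ∈ Set.Ioo a b, C ≤ |G1 x| := by
    intro x hx
    have := hder x hx
    rwa [iteratedDerivWithin_succ] at this
  have hG1cont : ContinuousOn G1 (Set.Ioo a b) := by
    have h1 : ContinuousOn (iteratedDerivWithin (k + 1) ψ (Set.Icc a b)) (Set.Icc a b) :=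
      hsmooth.continuousOn_iteratedDerivWithin (by exact_mod_cast le_rfl) hUD
    apply (h1.mono Set.Ioo_subset_Icc_self).congr
    intro x hx
    exact (congrFun (iteratedDerivWithin_succ (f := ψ)) x).symm
  have hcast : ((k + 1 : ℕ) : ℝ) = (k : ℝ) + 1 := by push_cast; ring
  rcases vdc_sign Set.ordConnected_Ioo hG1cont hC hder' with hsig | hsig
  · have := vdc_step_pos hk hc hIH hab hC hlam hsmooth hsig
    rwa [← hcast] at this
  · have hsm' : ContDiffOn ℝ (k + 1 : ℕ) (-ψ) (Set.Icc a b) := hsmooth.neg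
    have hpos' : ∀ x ∈ Set.Ioo a b,
        C ≤ derivWithin (iteratedDerivWithin k (-ψ) (Set.Icc a b)) (Set.Icc a b) x := by
      intro x hx
      have hxI : x ∈ Set.Icc a b := Set.Ioo_subset_Icc_self hx
      have heq : Set.EqOn (iteratedDerivWithin k (-ψ) (Set.Icc a b))
          (fun y => -(iteratedDerivWithin k ψ (Set.Icc a b) y)) (Set.Icc a b) := fun y hy =>
        iteratedDerivWithin_neg ψ
      have he2 : derivWithin (iteratedDerivWithin k (-ψ) (Set.Icc a b)) (Set.Icc a b) x
          = derivWithin (fun y => -(iteratedDerivWithin k ψ (Set.Icc a b) y))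
              (Set.Icc a b) x := derivWithin_congr heq (heq hxI)
      rw [he2, derivWithin.fun_neg]
      have := hsig x hx
      rw [hG1def] at this
      linarith
    have hres := vdc_step_pos hk hc hIH hab hC hlam hsm' hpos'
    have heqI : ∫ t in a..b, Complex.exp (Complex.I * lam * (((-ψ) t : ℝ) : ℂ))
        = (starRingEnd ℂ) (∫ t in a..b, Complex.exp (Complex.I * lam * (ψ t : ℂ))) := by
      rw [intervalIntegral.integral_of_le hab.le, intervalIntegral.integral_of_le hab.le,
        ← integral_conj]
      apply setIntegral_congr_fun measurableSet_Ioc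
      intro t _
      show Complex.exp (Complex.I * lam * ((-ψ t : ℝ) : ℂ))
          = (starRingEnd ℂ) (Complex.exp (Complex.I * lam * (ψ t : ℂ)))
      rw [← Complex.exp_conj]
      congr 1
      simp only [map_mul, Complex.conj_I, Complex.conj_ofReal, Complex.ofReal_neg]
      ring
    rw [heqI, RCLike.norm_conj] at hres
    rwa [← hcast] at hres

/-- Van der Corput's lemma: if `ψ ∈ C^k([a,b])` with `|ψ^{(k)}| ≥ C > 0` on `(a,b)`,
and either `k = 1` together with `ψ''` having at most one zero in `(a,b)`, or `k ≥ 2`,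
then `|∫_a^b e^{iλψ(t)} dt| ≤ c_k (λC)^{-1/k}` with `c_k` depending only on `k`. -/
theorem van_der_corput (k : ℕ) (hk : 1 ≤ k) :
    ∃ c : ℝ, 0 < c ∧
      ∀ (a b : ℝ), a < b → ∀ (ψ : ℝ → ℝ) (C : ℝ), 0 < C →
        ContDiffOn ℝ k ψ (Set.Icc a b) →
        (∀ x ∈ Set.Ioo a b, C ≤ |iteratedDerivWithin k ψ (Set.Icc a b) x|) →
        ((k = 1 ∧ {x ∈ Set.Ioo a b | deriv (deriv ψ) x = 0}.Subsingleton) ∨ 2 ≤ k) →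
        ∀ lam : ℝ, 0 < lam →
          ‖∫ t in a..b, Complex.exp (Complex.I * lam * (ψ t : ℂ))‖
            ≤ c * (lam * C) ^ (-(1 / (k : ℝ))) := by
  have key : ∃ c : ℝ, 0 < c ∧ VdcBound k c := by
    induction k, hk using Nat.le_induction with
    | base =>
      refine ⟨4, by norm_num, ?_⟩
      intro a b hab ψ C hC h1 h2 h3 lam hlam
      have h3' : {x ∈ Set.Ioo a b | deriv (deriv ψ) x = 0}.Subsingleton := by
        rcases h3 with ⟨_, hs⟩ | hs
        · exact hs
        · omega
      have h1' : ContDiffOn ℝ 1 ψ (Set.Icc a b) := by exact_mod_cast h1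
      have hres := vdc_base hab hC hlam h1' h2 h3'
      have hlc : 0 < lam * C := mul_pos hlam hC
      have he : (4 : ℝ) * (lam * C) ^ (-(1 / ((1 : ℕ) : ℝ))) = 4 / (lam * C) := by
        rw [show -(1 / ((1 : ℕ) : ℝ)) = (-1 : ℝ) by norm_num, Real.rpow_neg_one,
          div_eq_mul_inv]
      rw [he]
      exact hres
    | succ n hn ih =>
      obtain ⟨c, hc, hbd⟩ := ih
      exact ⟨2 * c + 2, by linarith, vdc_step hn hc hbd⟩
  exact key
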